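/- Let g be a free R-module of rank m with basis e_1,...,e_m carrying a Lie algebra structure, U(g) its universal enveloping algebra, and U* the R-linear dual of U(g) with basis elements d^j t dual to the PBW monomials e^j. Then the convolution product on U* (dual to the comultiplication μ(L) = L⊗1 + 1⊗L on U(g)) satisfies d^r t ⋆ d^s t = binom(r+s, r) d^{r+s} t for all multi-indices r, s, where binom(r+s,r) = Π_i binom(r_i+s_i, r_i). -/

import Mathlib

open TensorProduct

noncomputable section

variable (m : ℕ) (R : Type*) [CommRing R] [IsDomain R] [CharZero R]

/-- By the Poincaré–Birkhoff–Witt theorem, the universal enveloping algebra `U(g)` of a Lie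
algebra `g` free of rank `m` over `R` has `R`-basis the ordered monomials `e^j`, and as a
coalgebra it is the coalgebra with comultiplication determined by the primitive generators
`μ(e_i) = e_i ⊗ 1 + 1 ⊗ e_i`.  We realise this coalgebra on `MvPolynomial (Fin m) R`. -/
def comul : MvPolynomial (Fin m) R →ₐ[R]
    (MvPolynomial (Fin m) R ⊗[R] MvPolynomial (Fin m) R) :=
  MvPolynomial.aeval fun i =>
    MvPolynomial.X i ⊗ₜ[R] (1 : MvPolynomial (Fin m) R) +
      (1 : MvPolynomial (Fin m) R) ⊗ₜ[R] MvPolynomial.X i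

/-- The convolution product on `U* = Hom_R(U(g), R)`, dual to the comultiplication:
`(φ ⋆ ψ)(x) = (φ ⊗ ψ)(μ(x))`. -/
def convMul (φ ψ : MvPolynomial (Fin m) R →ₗ[R] R) :
    MvPolynomial (Fin m) R →ₗ[R] R :=
  (TensorProduct.lid R R).toLinearMap ∘ₗ TensorProduct.map φ ψ ∘ₗ (comul m R).toLinearMap

namespace ConvAux

open MvPolynomial Finsupp

/-- The functional on the tensor square extracting `coeff r ⊗ coeff s`. -/
def F (r s : Fin m →₀ ℕ) :
    MvPolynomial (Fin m) R ⊗[R] MvPolynomial (Fin m) R →ₗ[R] R :=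
  (TensorProduct.lid R R).toLinearMap ∘ₗ
    TensorProduct.map (MvPolynomial.lcoeff R r) (MvPolynomial.lcoeff R s)

lemma F_tmul (r s : Fin m →₀ ℕ) (x y : MvPolynomial (Fin m) R) :
    F m R r s (x ⊗ₜ[R] y) = MvPolynomial.coeff r x * MvPolynomial.coeff s y := by
  simp [F, MvPolynomial.lcoeff_apply]

open Classical in
lemma F_monomial_mul (r s u v : Fin m →₀ ℕ)
    (t : MvPolynomial (Fin m) R ⊗[R] MvPolynomial (Fin m) R) :
    F m R r s ((MvPolynomial.monomial u (1 : R) ⊗ₜ[R] MvPolynomial.monomial v (1 : R)) * t)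
      = if u ≤ r ∧ v ≤ s then F m R (r - u) (s - v) t else 0 := by
  induction t using TensorProduct.induction_on with
  | zero => simp
  | tmul x y =>
    rw [Algebra.TensorProduct.tmul_mul_tmul, F_tmul, F_tmul,
      MvPolynomial.coeff_monomial_mul', MvPolynomial.coeff_monomial_mul']
    split_ifs with h1 h2 h3 h4 <;>
      simp_all [one_mul] <;> tauto
  | add a b ha hb =>
    rw [mul_add, map_add, ha, hb]
    split_ifs <;> simp

lemma comul_X (i : Fin m) :
    comul m R (MvPolynomial.X i) =
      MvPolynomial.X i ⊗ₜ[R] 1 + 1 ⊗ₜ[R] MvPolynomial.X i := by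
  simp [comul]

open Classical in
lemma key (j : Fin m →₀ ℕ) : ∀ r s : Fin m →₀ ℕ,
    F m R r s (comul m R (MvPolynomial.monomial j (1 : R)))
      = if r + s = j then ((j.prod fun t c => c.choose (r t) : ℕ) : R) else 0 := by
  induction j using Finsupp.induction with
  | zero =>
    intro r s
    rw [show MvPolynomial.monomial (0 : Fin m →₀ ℕ) (1 : R) = 1 from by
      simp [MvPolynomial.monomial_zero'], map_one, Algebra.TensorProduct.one_def, F_tmul]
    by_cases h : r + s = 0
    · obtain ⟨hr, hs⟩ := _root_.add_eq_zero.mp h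
      subst hr; subst hs
      simp
    · rw [if_neg h]
      have hne : ¬(r = 0 ∧ s = 0) := fun hc => h (by rw [hc.1, hc.2, add_zero])
      simp only [MvPolynomial.coeff_one]
      split_ifs with h1 h2
      · exact absurd ⟨h1.symm, h2.symm⟩ hne
      all_goals simp
  | single_add i n j' hi hn ih =>
    intro r s
    have hj'i : j' i = 0 := Finsupp.notMem_support_iff.mp hi
    -- expand the comultiplication of the monomial
    have hexp : comul m R (MvPolynomial.monomial (Finsupp.single i n + j') (1 : R)) =
        ∑ k ∈ Finset.range (n + 1), (n.choose k) •
          ((MvPolynomial.monomial (Finsupp.single i k) (1 : R) ⊗ₜ[R]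
              MvPolynomial.monomial (Finsupp.single i (n - k)) (1 : R)) *
            comul m R (MvPolynomial.monomial j' 1)) := by
      rw [show MvPolynomial.monomial (Finsupp.single i n + j') (1 : R) =
          MvPolynomial.monomial (Finsupp.single i n) 1 * MvPolynomial.monomial j' 1 from by
        rw [MvPolynomial.monomial_mul, one_mul],
        map_mul, ← MvPolynomial.X_pow_eq_monomial, map_pow, comul_X, add_pow, Finset.sum_mul]
      refine Finset.sum_congr rfl fun k _ => ?_
      rw [Algebra.TensorProduct.tmul_pow, Algebra.TensorProduct.tmul_pow, one_pow, one_pow,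
        Algebra.TensorProduct.tmul_mul_tmul, one_mul, mul_one,
        MvPolynomial.X_pow_eq_monomial, MvPolynomial.X_pow_eq_monomial, nsmul_eq_mul]
      ring
    rw [hexp, map_sum]
    have hterm : ∀ k, F m R r s ((n.choose k) •
        ((MvPolynomial.monomial (Finsupp.single i k) (1 : R) ⊗ₜ[R]
            MvPolynomial.monomial (Finsupp.single i (n - k)) (1 : R)) *
          comul m R (MvPolynomial.monomial j' 1)))
        = (n.choose k : R) *
          (if Finsupp.single i k ≤ r ∧ Finsupp.single i (n - k) ≤ s then
            (if (r - Finsupp.single i k) + (s - Finsupp.single i (n - k)) = j' then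
              ((j'.prod fun t c => c.choose ((r - Finsupp.single i k) t) : ℕ) : R) else 0)
          else 0) := by
      intro k
      rw [map_nsmul, F_monomial_mul, nsmul_eq_mul]
      congr 1
      split_ifs with h1 h2
      · rw [ih (r - Finsupp.single i k) (s - Finsupp.single i (n - k)), if_pos h2]
      · rw [ih (r - Finsupp.single i k) (s - Finsupp.single i (n - k)), if_neg h2]
      · rfl
    simp only [hterm]
    by_cases hrs : r + s = Finsupp.single i n + j'
    · rw [if_pos hrs]
      have hri : r i + s i = n := by
        have := congrArg (fun f : Fin m →₀ ℕ => f i) hrs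
        simpa [hj'i] using this
      have hsi : n - r i = s i := by omega
      rw [Finset.sum_eq_single_of_mem (r i) (Finset.mem_range.mpr (by omega))]
      · -- the main term
        have h1 : Finsupp.single i (r i) ≤ r := Finsupp.single_le_iff.mpr le_rfl
        have h2 : Finsupp.single i (n - r i) ≤ s := by
          rw [hsi]; exact Finsupp.single_le_iff.mpr le_rfl
        have hcond : (r - Finsupp.single i (r i)) + (s - Finsupp.single i (n - r i)) = j' := by
          rw [tsub_add_tsub_comm h1 h2, hsi, ← Finsupp.single_add, hri, hrs,
            add_tsub_cancel_left]
        rw [if_pos ⟨h1, h2⟩, if_pos hcond]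
        have hprod : (j'.prod fun t c => c.choose ((r - Finsupp.single i (r i)) t)) =
            j'.prod fun t c => c.choose (r t) := by
          refine Finset.prod_congr rfl fun t ht => ?_
          have hti : t ≠ i := fun h => hi (h ▸ ht)
          simp only [Finsupp.tsub_apply, Finsupp.single_eq_of_ne' (Ne.symm hti), tsub_zero]
        rw [hprod]
        rw [Finsupp.prod_add_index_of_disjoint (by
          rw [Finsupp.support_single_ne_zero _ hn]
          exact Finset.disjoint_singleton_left.mpr hi)]
        have hsingle : ((Finsupp.single i n).prod fun t c => c.choose (r t)) = n.choose (r i) := by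
          rw [Finsupp.prod, Finsupp.support_single_ne_zero _ hn, Finset.prod_singleton,
            Finsupp.single_eq_same]
        rw [hsingle]
        push_cast
        ring
      · -- all other terms vanish
        intro k _ hk
        rcases Classical.em (Finsupp.single i k ≤ r ∧ Finsupp.single i (n - k) ≤ s) with h1 | h1
        · rw [if_pos h1]
          rcases Classical.em
              ((r - Finsupp.single i k) + (s - Finsupp.single i (n - k)) = j') with h2 | h2
          · exfalso
            have := congrArg (fun f : Fin m →₀ ℕ => f i) h2
            simp only [Finsupp.add_apply, Finsupp.tsub_apply, Finsupp.single_eq_same,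
              hj'i] at this
            have hkr : k ≤ r i := Finsupp.single_le_iff.mp h1.1
            omega
          · rw [if_neg h2, mul_zero]
        · rw [if_neg h1, mul_zero]
    · rw [if_neg hrs]
      refine Finset.sum_eq_zero fun k hk => ?_
      rcases Classical.em (Finsupp.single i k ≤ r ∧ Finsupp.single i (n - k) ≤ s) with h1 | h1
      · rw [if_pos h1]
        rcases Classical.em
            ((r - Finsupp.single i k) + (s - Finsupp.single i (n - k)) = j') with h2 | h2
        · exfalso
          apply hrs
          have hk' : k ≤ n := by
            have := Finset.mem_range.mp hk; omega
          calc r + s = (r - Finsupp.single i k) + (s - Finsupp.single i (n - k)) +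
                (Finsupp.single i k + Finsupp.single i (n - k)) := by
                rw [add_add_add_comm, tsub_add_cancel_of_le h1.1, tsub_add_cancel_of_le h1.2]
            _ = j' + Finsupp.single i n := by
                rw [h2, ← Finsupp.single_add, Nat.add_sub_cancel' hk']
            _ = Finsupp.single i n + j' := add_comm _ _
        · rw [if_neg h2, mul_zero]
      · rw [if_neg h1, mul_zero]

end ConvAux

/-- With `d^j t := MvPolynomial.lcoeff R j` the basis of `U*` dual to the PBW basis `e^j`,
the convolution product satisfies
`d^r t ⋆ d^s t = (Π_i binom(r_i + s_i, r_i)) · d^{r+s} t`. -/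
theorem convMul_dual_basis (r s : Fin m →₀ ℕ) :
    convMul m R (MvPolynomial.lcoeff R r) (MvPolynomial.lcoeff R s) =
      ((r + s).prod fun i n => n.choose (r i) : ℕ) • MvPolynomial.lcoeff R (r + s) := by
  classical
  apply LinearMap.ext
  intro p
  induction p using MvPolynomial.induction_on' with
  | monomial j a =>
    have ha : MvPolynomial.monomial j a = a • MvPolynomial.monomial j (1 : R) := by
      rw [MvPolynomial.smul_monomial, smul_eq_mul, mul_one]
    rw [ha, map_smul, map_smul]
    congr 1
    have : convMul m R (MvPolynomial.lcoeff R r) (MvPolynomial.lcoeff R s)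
        (MvPolynomial.monomial j (1 : R)) =
        ConvAux.F m R r s (comul m R (MvPolynomial.monomial j (1 : R))) := rfl
    rw [this, ConvAux.key m R j r s]
    rw [LinearMap.smul_apply, MvPolynomial.lcoeff_apply, MvPolynomial.coeff_monomial]
    by_cases h : r + s = j
    · rw [if_pos h, if_pos h.symm, ← h]
      simp [nsmul_eq_mul]
    · rw [if_neg h, if_neg (fun hc => h hc.symm)]
      simp
  | add p q hp hq =>
    rw [map_add, map_add, hp, hq]

end
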